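/- arXiv:2510.18761 — 2 statements merged into one kernel-verified Lean document; each statement's English description precedes it below -/
import Mathlib

section
/- The POPs (1,2;4,3) and (1,2;3,4) are Wilf-equivalent. (Explicitly, (1,2;4,3) is the POP of size 4 whose only strict relations are 2 below 1 and 3 below 4; (1,2;3,4) is the POP of size 4 whose only strict relations are 2 below 1 and 4 below 3.) -/
/-- A partially ordered pattern (POP) of size `k`: a strict partial order on the
labels `{1, …, k}`, given by the relation `lt a b` meaning "`a` is strictly below `b`". -/
structure POP (k : ℕ) where
  lt : ℕ → ℕ → Prop
  supp : ∀ a b, lt a b → 1 ≤ a ∧ a ≤ k ∧ 1 ≤ b ∧ b ≤ k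
  irrefl : ∀ a, ¬ lt a a
  trans : ∀ a b c, lt a b → lt b c → lt a c

/-- An occurrence of the POP `p` in a permutation `π` of `{1, …, n}`:
indices `i₁ < ⋯ < i_k` with `π (i_a) < π (i_b)` whenever label `a` is strictly
below label `b` in `p` (everything 0-indexed internally). -/
def POP.Occurs {k : ℕ} (p : POP k) {n : ℕ} (π : Equiv.Perm (Fin n)) : Prop :=
  ∃ f : Fin k → Fin n, StrictMono f ∧
    ∀ a b : Fin k, p.lt ((a : ℕ) + 1) ((b : ℕ) + 1) → π (f a) < π (f b)

/-- The number of permutations of `{1, …, n}` avoiding the POP `p`. -/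
noncomputable def POP.avoiders {k : ℕ} (p : POP k) (n : ℕ) : ℕ :=
  Nat.card {π : Equiv.Perm (Fin n) // ¬ p.Occurs π}

/-- Wilf-equivalence of POPs: the same number of avoiding permutations for every `n ≥ 1`. -/
def WilfEquiv {k l : ℕ} (p : POP k) (q : POP l) : Prop :=
  ∀ n : ℕ, 1 ≤ n → p.avoiders n = q.avoiders n

/-- `σ` is a transversal of the Ferrers board with row lengths `lam`
(rows and columns 0-indexed): the 1 of column `j` lies in cell (row `σ j`, column `j`),
which must lie inside the board. -/
def IsTransversal {n : ℕ} (lam : Fin n → ℕ) (σ : Equiv.Perm (Fin n)) : Prop :=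
  ∀ j : Fin n, (j : ℕ) < lam (σ j)

/-- The transversal `σ` of the Ferrers board `lam` contains the POP `p`:
there are rows `r₁ < ⋯ < r_k`, columns `c₁ < ⋯ < c_k`, all cells `(r i, c j)` inside
the board, and a bijection `τ` with `σ (c j) = r (τ j)` and `τ a < τ b` whenever
`a` is strictly below `b` in `p`. -/
def POP.TContains {k : ℕ} (p : POP k) {n : ℕ} (lam : Fin n → ℕ)
    (σ : Equiv.Perm (Fin n)) : Prop :=
  ∃ (r c : Fin k → Fin n) (τ : Equiv.Perm (Fin k)),
    StrictMono r ∧ StrictMono c ∧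
    (∀ i j, (c j : ℕ) < lam (r i)) ∧
    (∀ j, σ (c j) = r (τ j)) ∧
    ∀ a b : Fin k, p.lt ((a : ℕ) + 1) ((b : ℕ) + 1) → τ a < τ b

/-- The number of transversals of the Ferrers board `lam` avoiding the POP `p`. -/
noncomputable def POP.shapeAvoiders {k : ℕ} (p : POP k) {n : ℕ} (lam : Fin n → ℕ) : ℕ :=
  Nat.card {σ : Equiv.Perm (Fin n) // IsTransversal lam σ ∧ ¬ p.TContains lam σ}

/-- Shape-Wilf-equivalence of POPs: the same number of avoiding transversals for
every Ferrers board (a weakly decreasing positive row-length function). -/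
def ShapeWilfEquiv {k l : ℕ} (p : POP k) (q : POP l) : Prop :=
  ∀ (n : ℕ) (lam : Fin n → ℕ), Antitone lam → (∀ i, 0 < lam i) →
    p.shapeAvoiders lam = q.shapeAvoiders lam

/-- The ordinal sum `p ⊕ q` of POPs: labels `1, …, k` ordered as in `p`, labels
`k+1, …, k+l` ordered as in `q` (shifted), and every label `≤ k` strictly below
every label `> k`. -/
def OrdSum {k l : ℕ} (p : POP k) (q : POP l) : POP (k + l) where
  lt a b := (a ≤ k ∧ b ≤ k ∧ p.lt a b) ∨ (k < a ∧ k < b ∧ q.lt (a - k) (b - k)) ∨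
    (1 ≤ a ∧ a ≤ k ∧ k < b ∧ b ≤ k + l)
  supp a b h := by
    rcases h with ⟨_, _, h⟩ | ⟨ha, hb, h⟩ | h
    · have := p.supp _ _ h; omega
    · have := q.supp _ _ h; omega
    · omega
  irrefl a h := by
    rcases h with ⟨_, _, h⟩ | ⟨_, _, h⟩ | h
    · exact p.irrefl _ h
    · exact q.irrefl _ h
    · omega
  trans a b c hab hbc := by
    rcases hab with ⟨ha, hb, h1⟩ | ⟨ha, hb, h1⟩ | h1 <;>
      rcases hbc with ⟨hb', hc, h2⟩ | ⟨hb', hc, h2⟩ | h2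
    · exact Or.inl ⟨ha, hc, p.trans _ _ _ h1 h2⟩
    · omega
    · have := p.supp _ _ h1; right; right; omega
    · omega
    · exact Or.inr (Or.inl ⟨ha, hc, q.trans _ _ _ h1 h2⟩)
    · omega
    · omega
    · have := q.supp _ _ h2; right; right; omega
    · omega

/-- The disjoint sum `p + q` of POPs: labels `1, …, k` ordered as in `p`, labels
`k+1, …, k+l` ordered as in `q` (shifted), and no relations between the two parts. -/
def DisjSum {k l : ℕ} (p : POP k) (q : POP l) : POP (k + l) where
  lt a b := (a ≤ k ∧ b ≤ k ∧ p.lt a b) ∨ (k < a ∧ k < b ∧ q.lt (a - k) (b - k))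
  supp a b h := by
    rcases h with ⟨_, _, h⟩ | ⟨ha, hb, h⟩
    · have := p.supp _ _ h; omega
    · have := q.supp _ _ h; omega
  irrefl a h := by
    rcases h with ⟨_, _, h⟩ | ⟨_, _, h⟩
    · exact p.irrefl _ h
    · exact q.irrefl _ h
  trans a b c hab hbc := by
    rcases hab with ⟨ha, hb, h1⟩ | ⟨ha, hb, h1⟩ <;>
      rcases hbc with ⟨hb', hc, h2⟩ | ⟨hb', hc, h2⟩
    · exact Or.inl ⟨ha, hc, p.trans _ _ _ h1 h2⟩
    · omega
    · omega
    · exact Or.inr ⟨ha, hc, q.trans _ _ _ h1 h2⟩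

/-- The label `i` is isolated in the POP `p`: it is a label of `p` incomparable
to every other label. -/
def POP.Isolated {k : ℕ} (p : POP k) (i : ℕ) : Prop :=
  1 ≤ i ∧ i ≤ k ∧ ∀ j, ¬ p.lt i j ∧ ¬ p.lt j i

/-- The restriction of the POP `p` to the initial labels `{1, …, m}`. -/
def POP.restrictInit {k : ℕ} (p : POP k) (m : ℕ) : POP m where
  lt a b := a ≤ m ∧ b ≤ m ∧ p.lt a b
  supp a b h := by have := p.supp _ _ h.2.2; omega
  irrefl a h := p.irrefl a h.2.2
  trans a b c h1 h2 := ⟨h1.1, h2.2.1, p.trans _ _ _ h1.2.2 h2.2.2⟩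

/-- The reverse `r(p)` of a POP of size `k`: `a` is strictly below `b` iff
`k+1-a` is strictly below `k+1-b` in `p`. -/
def POP.rev {k : ℕ} (p : POP k) : POP k where
  lt a b := a ≤ k ∧ b ≤ k ∧ p.lt (k + 1 - a) (k + 1 - b)
  supp a b h := by
    obtain ⟨h1, h2, h3⟩ := h
    have := p.supp _ _ h3; omega
  irrefl a h := p.irrefl _ h.2.2
  trans a b c h1 h2 := ⟨h1.1, h2.2.1, p.trans _ _ _ h1.2.2 h2.2.2⟩

/-- The POP `(1,2;4,3)`: only relations `2 < 1` and `3 < 4`. -/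
def pop12c43 : POP 4 where
  lt a b := (a = 2 ∧ b = 1) ∨
    (a = 3 ∧ b = 4)
  supp a b h := by omega
  irrefl a h := by omega
  trans a b c h1 h2 := by omega

/-- The POP `(1,2;3,4)`: only relations `2 < 1` and `4 < 3`. -/
def pop12c34 : POP 4 where
  lt a b := (a = 2 ∧ b = 1) ∨
    (a = 4 ∧ b = 3)
  supp a b h := by omega
  irrefl a h := by omega
  trans a b c h1 h2 := by omega

section Aux

variable {n : ℕ}

/-- There is an inversion of `π` ending at position `m`, or `m = n`. -/
private def InvAt (π : Equiv.Perm (Fin n)) (m : ℕ) : Prop :=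
  m = n ∨ ∃ i j : Fin n, i < j ∧ (j : ℕ) = m ∧ π j < π i

private instance (π : Equiv.Perm (Fin n)) : DecidablePred (InvAt π) := fun _ =>
  inferInstanceAs (Decidable (_ ∨ _))

/-- The first position at which an inversion of `π` ends (or `n` if none). -/
private def tval (π : Equiv.Perm (Fin n)) : ℕ :=
  Nat.find (⟨n, Or.inl rfl⟩ : ∃ m, InvAt π m)

private lemma tval_le (π : Equiv.Perm (Fin n)) : tval π ≤ n :=
  Nat.find_le (Or.inl rfl)

private lemma tval_spec (π : Equiv.Perm (Fin n)) (h : tval π < n) :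
    ∃ i j : Fin n, i < j ∧ (j : ℕ) = tval π ∧ π j < π i := by
  have hspec : InvAt π (tval π) := Nat.find_spec (⟨n, Or.inl rfl⟩ : ∃ m, InvAt π m)
  rcases hspec with h' | h'
  · omega
  · exact h'

private lemma tval_min (π : Equiv.Perm (Fin n)) {i j : Fin n}
    (hij : i < j) (hinv : π j < π i) : tval π ≤ (j : ℕ) := by
  by_contra hc
  push_neg at hc
  exact Nat.find_min (⟨n, Or.inl rfl⟩ : ∃ m, InvAt π m) hc
    (Or.inr ⟨i, j, hij, rfl, hinv⟩)

private lemma tval_congr (π π' : Equiv.Perm (Fin n))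
    (hagree : ∀ j : Fin n, (j : ℕ) ≤ tval π → π' j = π j) :
    tval π' = tval π := by
  rcases lt_trichotomy (tval π') (tval π) with h | h | h
  · -- π' has an inversion ending before tval π, hence so does π : contradiction
    exfalso
    have hlt : tval π' < n := lt_of_lt_of_le h (tval_le π)
    obtain ⟨i, j, hij, hj, hinv⟩ := tval_spec π' hlt
    have hjle : (j : ℕ) ≤ tval π := by omega
    have hile : (i : ℕ) ≤ tval π := by
      have : (i : ℕ) < (j : ℕ) := hij
      omega
    rw [hagree i hile, hagree j hjle] at hinv
    have := tval_min π hij hinv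
    omega
  · exact h
  · -- π has an inversion ending at tval π, so π' has one too
    exfalso
    have hlt : tval π < n := by
      have := tval_le π'
      omega
    obtain ⟨i, j, hij, hj, hinv⟩ := tval_spec π hlt
    have hjle : (j : ℕ) ≤ tval π := le_of_eq hj
    have hile : (i : ℕ) ≤ tval π := by
      have : (i : ℕ) < (j : ℕ) := hij
      omega
    rw [← hagree i hile, ← hagree j hjle] at hinv
    have := tval_min π' hij hinv
    omega

/-- The function reversing positions strictly after `t`. -/
private def rhoFun (t : ℕ) : Fin n → Fin n := fun j =>
  if _h : (j : ℕ) ≤ t then j else ⟨n + t - j, by have := j.isLt; omega⟩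

private lemma rhoFun_invol (t : ℕ) : Function.Involutive (rhoFun (n := n) t) := by
  intro j
  have hj : (j : ℕ) < n := j.isLt
  unfold rhoFun
  by_cases h : (j : ℕ) ≤ t
  · simp [h]
  · rw [dif_neg h, dif_neg (by simp; omega : ¬ (((⟨n + t - (j : ℕ),
      by omega⟩ : Fin n) : ℕ) ≤ t))]
    apply Fin.ext
    simp
    omega

/-- The permutation reversing the positions strictly after `t`. -/
private def rho (t : ℕ) : Equiv.Perm (Fin n) :=
  Function.Involutive.toPerm (rhoFun t) (rhoFun_invol t)

private lemma rho_apply_le {t : ℕ} {j : Fin n} (h : (j : ℕ) ≤ t) :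
    (rho t) j = j := by
  show rhoFun t j = j
  simp [rhoFun, h]

private lemma rho_apply_gt {t : ℕ} {j : Fin n} (h : t < (j : ℕ)) :
    ((rho t) j : ℕ) = n + t - j := by
  show ((rhoFun t j : Fin n) : ℕ) = n + t - j
  have h2 : ¬ ((j : ℕ) ≤ t) := by omega
  simp [rhoFun, h2]

private lemma rho_mul_rho (t : ℕ) : (rho t : Equiv.Perm (Fin n)) * rho t = 1 := by
  apply Equiv.ext
  intro x
  exact rhoFun_invol t x

/-- Reverse the part of `π` after its first inversion bottom. -/
private def phi (π : Equiv.Perm (Fin n)) : Equiv.Perm (Fin n) :=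
  π * rho (tval π)

private lemma phi_apply_le (π : Equiv.Perm (Fin n)) {j : Fin n}
    (h : (j : ℕ) ≤ tval π) : phi π j = π j := by
  simp [phi, Equiv.Perm.mul_apply, rho_apply_le h]

private lemma tval_phi (π : Equiv.Perm (Fin n)) : tval (phi π) = tval π :=
  tval_congr π (phi π) (fun j hj => phi_apply_le π hj)

private lemma tval_phi2 (π : Equiv.Perm (Fin n)) :
    tval (π * rho (tval π)) = tval π := tval_phi π

private lemma phi_phi (π : Equiv.Perm (Fin n)) : phi (phi π) = π := by
  simp only [phi, tval_phi2, mul_assoc, rho_mul_rho, mul_one]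

private lemma occ1_iff (π : Equiv.Perm (Fin n)) :
    pop12c43.Occurs π ↔
      ∃ i j k l : Fin n, i < j ∧ j < k ∧ k < l ∧ π j < π i ∧ π k < π l := by
  constructor
  · rintro ⟨f, hf, h⟩
    refine ⟨f 0, f 1, f 2, f 3, ?_, ?_, ?_, ?_, ?_⟩
    · exact hf (by decide)
    · exact hf (by decide)
    · exact hf (by decide)
    · exact h 1 0 (by left; exact ⟨rfl, rfl⟩)
    · exact h 2 3 (by right; exact ⟨rfl, rfl⟩)
  · rintro ⟨i, j, k, l, hij, hjk, hkl, h1, h2⟩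
    refine ⟨![i, j, k, l], ?_, ?_⟩
    · rw [Fin.strictMono_iff_lt_succ]
      intro a
      fin_cases a <;> simpa
    · intro a b hab
      rcases hab with ⟨ha, hb⟩ | ⟨ha, hb⟩
      · have ha' : a = 1 := by
          apply Fin.ext; have := a.isLt; omega
        have hb' : b = 0 := by
          apply Fin.ext; have := b.isLt; omega
        subst ha'; subst hb'
        simpa using h1
      · have ha' : a = 2 := by
          apply Fin.ext; have := a.isLt; omega
        have hb' : b = 3 := by
          apply Fin.ext; have := b.isLt; omega
        subst ha'; subst hb'
        simpa using h2

private lemma occ2_iff (π : Equiv.Perm (Fin n)) :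
    pop12c34.Occurs π ↔
      ∃ i j k l : Fin n, i < j ∧ j < k ∧ k < l ∧ π j < π i ∧ π l < π k := by
  constructor
  · rintro ⟨f, hf, h⟩
    refine ⟨f 0, f 1, f 2, f 3, ?_, ?_, ?_, ?_, ?_⟩
    · exact hf (by decide)
    · exact hf (by decide)
    · exact hf (by decide)
    · exact h 1 0 (by left; exact ⟨rfl, rfl⟩)
    · exact h 3 2 (by right; exact ⟨rfl, rfl⟩)
  · rintro ⟨i, j, k, l, hij, hjk, hkl, h1, h2⟩
    refine ⟨![i, j, k, l], ?_, ?_⟩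
    · rw [Fin.strictMono_iff_lt_succ]
      intro a
      fin_cases a <;> simpa
    · intro a b hab
      rcases hab with ⟨ha, hb⟩ | ⟨ha, hb⟩
      · have ha' : a = 1 := by
          apply Fin.ext; have := a.isLt; omega
        have hb' : b = 0 := by
          apply Fin.ext; have := b.isLt; omega
        subst ha'; subst hb'
        simpa using h1
      · have ha' : a = 3 := by
          apply Fin.ext; have := a.isLt; omega
        have hb' : b = 2 := by
          apply Fin.ext; have := b.isLt; omega
        subst ha'; subst hb'
        simpa using h2

private lemma avoid1_iff (π : Equiv.Perm (Fin n)) :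
    ¬ pop12c43.Occurs π ↔
      ∀ k l : Fin n, tval π < (k : ℕ) → k < l → π l < π k := by
  rw [occ1_iff]
  constructor
  · intro h k l htk hkl
    have hk : tval π < n := lt_of_lt_of_le htk (Nat.le_of_lt_succ (Nat.lt_succ_of_lt k.isLt))
    obtain ⟨i, j, hij, hj, hinv⟩ := tval_spec π hk
    have hjk : j < k := by
      change (j : ℕ) < (k : ℕ); omega
    have hne : π l ≠ π k := fun he => absurd (π.injective he) (by
      intro hlk; exact absurd hkl (by simp [hlk]))
    rcases lt_or_gt_of_ne hne with h' | h'
    · exact h'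
    · exact absurd ⟨i, j, k, l, hij, hjk, hkl, hinv, h'⟩ h
  · rintro h ⟨i, j, k, l, hij, hjk, hkl, h1, h2⟩
    have htj : tval π ≤ (j : ℕ) := tval_min π hij h1
    have htk : tval π < (k : ℕ) := by
      have : (j : ℕ) < (k : ℕ) := hjk
      omega
    exact absurd h2 (not_lt_of_gt (h k l htk hkl))

private lemma avoid2_iff (π : Equiv.Perm (Fin n)) :
    ¬ pop12c34.Occurs π ↔
      ∀ k l : Fin n, tval π < (k : ℕ) → k < l → π k < π l := by
  rw [occ2_iff]
  constructor
  · intro h k l htk hkl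
    have hk : tval π < n := lt_of_lt_of_le htk (Nat.le_of_lt_succ (Nat.lt_succ_of_lt k.isLt))
    obtain ⟨i, j, hij, hj, hinv⟩ := tval_spec π hk
    have hjk : j < k := by
      change (j : ℕ) < (k : ℕ); omega
    have hne : π k ≠ π l := fun he => absurd (π.injective he) (by
      intro hlk; exact absurd hkl (by simp [hlk]))
    rcases lt_or_gt_of_ne hne with h' | h'
    · exact h'
    · exact absurd ⟨i, j, k, l, hij, hjk, hkl, hinv, h'⟩ h
  · rintro h ⟨i, j, k, l, hij, hjk, hkl, h1, h2⟩
    have htj : tval π ≤ (j : ℕ) := tval_min π hij h1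
    have htk : tval π < (k : ℕ) := by
      have : (j : ℕ) < (k : ℕ) := hjk
      omega
    exact absurd h2 (not_lt_of_gt (h k l htk hkl))

private lemma transfer1 (π : Equiv.Perm (Fin n)) (h : ¬ pop12c43.Occurs π) :
    ¬ pop12c34.Occurs (phi π) := by
  rw [avoid1_iff] at h
  rw [avoid2_iff, tval_phi]
  intro k l htk hkl
  set t := tval π with ht
  have hkn : (k : ℕ) < n := k.isLt
  have hln : (l : ℕ) < n := l.isLt
  have htl : t < (l : ℕ) := lt_trans htk hkl
  have hrk : ((rho t : Equiv.Perm (Fin n)) k : ℕ) = n + t - k := rho_apply_gt htk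
  have hrl : ((rho t : Equiv.Perm (Fin n)) l : ℕ) = n + t - l := rho_apply_gt htl
  have hab : (rho t : Equiv.Perm (Fin n)) l < (rho t : Equiv.Perm (Fin n)) k := by
    change ((rho t : Equiv.Perm (Fin n)) l : ℕ) < _
    have : (k : ℕ) < (l : ℕ) := hkl
    omega
  have hta : t < ((rho t : Equiv.Perm (Fin n)) l : ℕ) := by omega
  exact h _ _ hta hab

private lemma transfer2 (π : Equiv.Perm (Fin n)) (h : ¬ pop12c34.Occurs π) :
    ¬ pop12c43.Occurs (phi π) := by
  rw [avoid2_iff] at h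
  rw [avoid1_iff, tval_phi]
  intro k l htk hkl
  set t := tval π with ht
  have hkn : (k : ℕ) < n := k.isLt
  have hln : (l : ℕ) < n := l.isLt
  have htl : t < (l : ℕ) := lt_trans htk hkl
  have hrk : ((rho t : Equiv.Perm (Fin n)) k : ℕ) = n + t - k := rho_apply_gt htk
  have hrl : ((rho t : Equiv.Perm (Fin n)) l : ℕ) = n + t - l := rho_apply_gt htl
  have hab : (rho t : Equiv.Perm (Fin n)) l < (rho t : Equiv.Perm (Fin n)) k := by
    change ((rho t : Equiv.Perm (Fin n)) l : ℕ) < _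
    have : (k : ℕ) < (l : ℕ) := hkl
    omega
  have hta : t < ((rho t : Equiv.Perm (Fin n)) l : ℕ) := by omega
  exact h _ _ hta hab

end Aux

/-- The POPs `(1,2;4,3)` and `(1,2;3,4)` are Wilf-equivalent. -/
theorem stmt15 : WilfEquiv pop12c43 pop12c34 := by
  intro n _
  unfold POP.avoiders
  apply Nat.card_congr
  exact
    { toFun := fun π => ⟨phi π.1, transfer1 π.1 π.2⟩
      invFun := fun π => ⟨phi π.1, transfer2 π.1 π.2⟩
      left_inv := fun π => Subtype.ext (phi_phi π.1)
      right_inv := fun π => Subtype.ext (phi_phi π.1) }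
end

section
/- The POPs (1,2;3,5;4) and (1,2;5,3;4) are Wilf-equivalent. (Explicitly, (1,2;3,5;4) is the POP of size 5 whose only strict relations are 2 below 1 and 5 below 3, with 4 isolated; (1,2;5,3;4) is the POP of size 5 whose only strict relations are 2 below 1 and 3 below 5, with 4 isolated.) -/
/-- The POP `(1,2;3,5;4)`: only relations `2 < 1` and `5 < 3`, label `4` isolated. -/
def pop12c35i4 : POP 5 where
  lt a b := (a = 2 ∧ b = 1) ∨
    (a = 5 ∧ b = 3)
  supp a b h := by omega
  irrefl a h := by omega
  trans a b c h1 h2 := by omega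

/-- The POP `(1,2;5,3;4)`: only relations `2 < 1` and `3 < 5`, label `4` isolated. -/
def pop12c53i4 : POP 5 where
  lt a b := (a = 2 ∧ b = 1) ∨
    (a = 3 ∧ b = 5)
  supp a b h := by omega
  irrefl a h := by omega
  trans a b c h1 h2 := by omega

section AuxRev

variable {n : ℕ}

/-- The order-reversing involution on a finite set of `Fin n`, extended by the identity. -/
noncomputable def revOn (V : Finset (Fin n)) : Fin n → Fin n := fun x =>
  if hx : x ∈ V then
    (V.orderIsoOfFin rfl (Fin.rev ((V.orderIsoOfFin rfl).symm ⟨x, hx⟩)) : Fin n)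
  else x

lemma revOn_mem {V : Finset (Fin n)} {x : Fin n} (hx : x ∈ V) : revOn V x ∈ V := by
  simp only [revOn, dif_pos hx]
  exact (V.orderIsoOfFin rfl _).2

lemma revOn_not_mem {V : Finset (Fin n)} {x : Fin n} (hx : x ∉ V) : revOn V x = x :=
  dif_neg hx

lemma revOn_invol (V : Finset (Fin n)) : Function.Involutive (revOn V) := by
  intro x
  by_cases hx : x ∈ V
  · have h1 : revOn V x ∈ V := revOn_mem hx
    conv_lhs => rw [revOn]
    rw [dif_pos h1]
    have key : (⟨revOn V x, h1⟩ : {y // y ∈ V}) =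
        V.orderIsoOfFin rfl (Fin.rev ((V.orderIsoOfFin rfl).symm ⟨x, hx⟩)) := by
      apply Subtype.ext
      simp [revOn, dif_pos hx]
    rw [key, OrderIso.symm_apply_apply, Fin.rev_rev, OrderIso.apply_symm_apply]
  · rw [revOn_not_mem hx, revOn_not_mem hx]

lemma revOn_lt_iff {V : Finset (Fin n)} {u v : Fin n} (hu : u ∈ V) (hv : v ∈ V) :
    (revOn V u < revOn V v ↔ v < u) := by
  simp only [revOn, dif_pos hu, dif_pos hv]
  rw [Subtype.coe_lt_coe, OrderIso.lt_iff_lt, Fin.rev_lt_rev, OrderIso.lt_iff_lt,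
    Subtype.mk_lt_mk]

end AuxRev

section BijDef

variable {n : ℕ}

/-- Positions that are right ends of some inversion. -/
def invEnds (π : Equiv.Perm (Fin n)) : Finset (Fin n) :=
  Finset.univ.filter (fun j => ∃ i, i < j ∧ π j < π i)

lemma mem_invEnds {π : Equiv.Perm (Fin n)} {j : Fin n} :
    j ∈ invEnds π ↔ ∃ i, i < j ∧ π j < π i := by
  simp [invEnds]

/-- The first position that is the right end of an inversion. -/
noncomputable def minEnd (π : Equiv.Perm (Fin n)) (h : (invEnds π).Nonempty) : Fin n :=
  (invEnds π).min' h

lemma minEnd_mem {π : Equiv.Perm (Fin n)} (h : (invEnds π).Nonempty) :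
    ∃ i, i < minEnd π h ∧ π (minEnd π h) < π i :=
  mem_invEnds.1 ((invEnds π).min'_mem h)

lemma minEnd_le {π : Equiv.Perm (Fin n)} (h : (invEnds π).Nonempty) {j : Fin n}
    (hj : ∃ i, i < j ∧ π j < π i) : minEnd π h ≤ j :=
  (invEnds π).min'_le j (mem_invEnds.2 hj)

/-- The set of values occurring after the first inversion end. -/
noncomputable def Vs (π : Equiv.Perm (Fin n)) (h : (invEnds π).Nonempty) : Finset (Fin n) :=
  Finset.univ.filter (fun v => minEnd π h < π.symm v)

lemma mem_Vs {π : Equiv.Perm (Fin n)} {h : (invEnds π).Nonempty} {v : Fin n} :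
    v ∈ Vs π h ↔ minEnd π h < π.symm v := by
  simp [Vs]

lemma apply_mem_Vs {π : Equiv.Perm (Fin n)} {h : (invEnds π).Nonempty} {j : Fin n} :
    π j ∈ Vs π h ↔ minEnd π h < j := by
  rw [mem_Vs, Equiv.symm_apply_apply]

/-- The involution on permutations: complement the values after the first inversion end. -/
noncomputable def Phi (π : Equiv.Perm (Fin n)) : Equiv.Perm (Fin n) :=
  if h : (invEnds π).Nonempty then ((revOn_invol (Vs π h)).toPerm ) * π else π

lemma Phi_apply {π : Equiv.Perm (Fin n)} (h : (invEnds π).Nonempty) (x : Fin n) :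
    Phi π x = revOn (Vs π h) (π x) := by
  rw [Phi, dif_pos h]; rfl

lemma Phi_fix {π : Equiv.Perm (Fin n)} (h : (invEnds π).Nonempty) {j : Fin n}
    (hj : j ≤ minEnd π h) : Phi π j = π j := by
  rw [Phi_apply h]
  exact revOn_not_mem (by rw [apply_mem_Vs]; exact not_lt.2 hj)

lemma Phi_revcmp {π : Equiv.Perm (Fin n)} (h : (invEnds π).Nonempty) {i j : Fin n}
    (hi : minEnd π h < i) (hj : minEnd π h < j) :
    (Phi π i < Phi π j ↔ π j < π i) := by
  rw [Phi_apply h, Phi_apply h]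
  exact revOn_lt_iff (apply_mem_Vs.2 hi) (apply_mem_Vs.2 hj)

lemma Phi_noInv {π : Equiv.Perm (Fin n)} (h : ¬ (invEnds π).Nonempty) : Phi π = π := by
  rw [Phi, dif_neg h]

lemma invEnds_Phi_nonempty {π : Equiv.Perm (Fin n)} (h : (invEnds π).Nonempty) :
    (invEnds (Phi π)).Nonempty := by
  obtain ⟨i0, hi0, hlt⟩ := minEnd_mem h
  refine ⟨minEnd π h, mem_invEnds.2 ⟨i0, hi0, ?_⟩⟩
  rw [Phi_fix h le_rfl, Phi_fix h hi0.le]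
  exact hlt

lemma minEnd_Phi {π : Equiv.Perm (Fin n)} (h : (invEnds π).Nonempty) :
    minEnd (Phi π) (invEnds_Phi_nonempty h) = minEnd π h := by
  set e := minEnd π h with he
  apply le_antisymm
  · obtain ⟨i0, hi0, hlt⟩ := minEnd_mem h
    apply minEnd_le
    exact ⟨i0, hi0, by rw [Phi_fix h le_rfl, Phi_fix h hi0.le]; exact hlt⟩
  · by_contra hc
    push_neg at hc
    obtain ⟨i, hi, hlt⟩ := minEnd_mem (invEnds_Phi_nonempty h)
    set e' := minEnd (Phi π) (invEnds_Phi_nonempty h) with he'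
    rw [Phi_fix h hc.le, Phi_fix h (hi.le.trans hc.le)] at hlt
    have : e ≤ e' := minEnd_le h ⟨i, hi, hlt⟩
    exact absurd this (not_le.2 hc)

lemma Vs_Phi {π : Equiv.Perm (Fin n)} (h : (invEnds π).Nonempty) :
    Vs (Phi π) (invEnds_Phi_nonempty h) = Vs π h := by
  ext v
  rw [mem_Vs, mem_Vs, minEnd_Phi h]
  have hsymm : (Phi π).symm v = π.symm (revOn (Vs π h) v) := by
    rw [Phi, dif_pos h]
    rfl
  rw [hsymm]
  by_cases hv : v ∈ Vs π h
  · have h1 : revOn (Vs π h) v ∈ Vs π h := revOn_mem hv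
    rw [mem_Vs] at h1 hv
    exact ⟨fun _ => hv, fun _ => h1⟩
  · rw [revOn_not_mem hv]

lemma Phi_Phi (π : Equiv.Perm (Fin n)) : Phi (Phi π) = π := by
  by_cases h : (invEnds π).Nonempty
  · have h' := invEnds_Phi_nonempty h
    ext x
    rw [Phi_apply h', Vs_Phi h, Phi_apply h]
    rw [revOn_invol (Vs π h) (π x)]
  · rw [Phi_noInv h, Phi_noInv h]

end BijDef

section OccChar

variable {n : ℕ}

def Occ1 (π : Equiv.Perm (Fin n)) : Prop :=
  ∃ i1 i2 i3 i4 i5 : Fin n, i1 < i2 ∧ i2 < i3 ∧ i3 < i4 ∧ i4 < i5 ∧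
    π i2 < π i1 ∧ π i5 < π i3

def Occ2 (π : Equiv.Perm (Fin n)) : Prop :=
  ∃ i1 i2 i3 i4 i5 : Fin n, i1 < i2 ∧ i2 < i3 ∧ i3 < i4 ∧ i4 < i5 ∧
    π i2 < π i1 ∧ π i3 < π i5

lemma strictMono5 {a b c d e : Fin n} (h1 : a < b) (h2 : b < c) (h3 : c < d) (h4 : d < e) :
    StrictMono ![a, b, c, d, e] := by
  have h13 := h1.trans h2
  have h14 := h13.trans h3
  have h15 := h14.trans h4
  have h24 := h2.trans h3
  have h25 := h24.trans h4
  have h35 := h3.trans h4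
  intro i j hij
  fin_cases i <;> fin_cases j <;> simp_all

lemma occ1_iff_s17 (π : Equiv.Perm (Fin n)) : pop12c35i4.Occurs π ↔ Occ1 π := by
  constructor
  · rintro ⟨f, hf, hrel⟩
    refine ⟨f 0, f 1, f 2, f 3, f 4, hf (by decide), hf (by decide), hf (by decide),
      hf (by decide), ?_, ?_⟩
    · exact hrel 1 0 (by left; exact ⟨rfl, rfl⟩)
    · exact hrel 4 2 (by right; exact ⟨rfl, rfl⟩)
  · rintro ⟨i1, i2, i3, i4, i5, h1, h2, h3, h4, hA, hB⟩
    refine ⟨![i1, i2, i3, i4, i5], strictMono5 h1 h2 h3 h4, ?_⟩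
    intro a b hab
    fin_cases a <;> fin_cases b <;>
      simp_all [pop12c35i4]

lemma occ2_iff_s17 (π : Equiv.Perm (Fin n)) : pop12c53i4.Occurs π ↔ Occ2 π := by
  constructor
  · rintro ⟨f, hf, hrel⟩
    refine ⟨f 0, f 1, f 2, f 3, f 4, hf (by decide), hf (by decide), hf (by decide),
      hf (by decide), ?_, ?_⟩
    · exact hrel 1 0 (by left; exact ⟨rfl, rfl⟩)
    · exact hrel 2 4 (by right; exact ⟨rfl, rfl⟩)
  · rintro ⟨i1, i2, i3, i4, i5, h1, h2, h3, h4, hA, hB⟩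
    refine ⟨![i1, i2, i3, i4, i5], strictMono5 h1 h2 h3 h4, ?_⟩
    intro a b hab
    fin_cases a <;> fin_cases b <;>
      simp_all [pop12c53i4]

lemma occ1_to_occ2 {π : Equiv.Perm (Fin n)} (hp : Occ1 π) : Occ2 (Phi π) := by
  obtain ⟨i1, i2, i3, i4, i5, h1, h2, h3, h4, hA, hB⟩ := hp
  have h : (invEnds π).Nonempty := ⟨i2, mem_invEnds.2 ⟨i1, h1, hA⟩⟩
  set e := minEnd π h with he
  have he2 : e ≤ i2 := minEnd_le h ⟨i1, h1, hA⟩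
  obtain ⟨i0, hi0, hlt0⟩ := minEnd_mem h
  have he3 : e < i3 := lt_of_le_of_lt he2 h2
  refine ⟨i0, e, i3, i4, i5, hi0, he3, h3, h4, ?_, ?_⟩
  · rw [Phi_fix h le_rfl, Phi_fix h hi0.le]; exact hlt0
  · rw [Phi_revcmp h he3 (he3.trans (h3.trans h4))]; exact hB

lemma occ2_to_occ1 {π : Equiv.Perm (Fin n)} (hp : Occ2 π) : Occ1 (Phi π) := by
  obtain ⟨i1, i2, i3, i4, i5, h1, h2, h3, h4, hA, hB⟩ := hp
  have h : (invEnds π).Nonempty := ⟨i2, mem_invEnds.2 ⟨i1, h1, hA⟩⟩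
  set e := minEnd π h with he
  have he2 : e ≤ i2 := minEnd_le h ⟨i1, h1, hA⟩
  obtain ⟨i0, hi0, hlt0⟩ := minEnd_mem h
  have he3 : e < i3 := lt_of_le_of_lt he2 h2
  refine ⟨i0, e, i3, i4, i5, hi0, he3, h3, h4, ?_, ?_⟩
  · rw [Phi_fix h le_rfl, Phi_fix h hi0.le]; exact hlt0
  · rw [Phi_revcmp h (he3.trans (h3.trans h4)) he3]; exact hB

noncomputable def avoidEquiv (n : ℕ) :
    {π : Equiv.Perm (Fin n) // ¬ pop12c35i4.Occurs π} ≃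
      {π : Equiv.Perm (Fin n) // ¬ pop12c53i4.Occurs π} where
  toFun x := ⟨Phi x.1, fun hc => x.2 (by
    rw [occ1_iff_s17]
    have := occ2_to_occ1 ((occ2_iff_s17 _).1 hc)
    rwa [Phi_Phi] at this)⟩
  invFun x := ⟨Phi x.1, fun hc => x.2 (by
    rw [occ2_iff_s17]
    have := occ1_to_occ2 ((occ1_iff_s17 _).1 hc)
    rwa [Phi_Phi] at this)⟩
  left_inv x := Subtype.ext (Phi_Phi x.1)
  right_inv x := Subtype.ext (Phi_Phi x.1)

end OccChar

/-- The POPs `(1,2;3,5;4)` and `(1,2;5,3;4)` are Wilf-equivalent. -/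
theorem stmt17 : WilfEquiv pop12c35i4 pop12c53i4 := by
  intro n _
  exact Nat.card_congr (avoidEquiv n)
end
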